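/- Let T ∈ GL(2, ℝ). If there exist a constant C ∈ ℝ and a measurable λ : ℝ² → ℝ whose support has finite, nonzero Lebesgue measure such that λ(y) = C · λ(T y) for almost every y, then T is conjugate in GL(2, ℝ) to an orthogonal matrix (i.e. there exists B ∈ GL(2, ℝ) such that B T B⁻¹ is a rotation or a reflection matrix). -/

import Mathlib

open MeasureTheory Matrix

section Stmt8Aux
open Filter Set Topology

noncomputable section
namespace Stmt8

abbrev E2 := Fin 2 → ℝ

lemma preimage_meas (M : Matrix (Fin 2) (Fin 2) ℝ) (hdet : M.det ≠ 0) (s : Set E2) :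
    volume ((fun y => M *ᵥ y) ⁻¹' s) = ENNReal.ofReal |(M.det)⁻¹| * volume s := by
  have h1 : (fun y : E2 => M *ᵥ y) = ⇑(Matrix.toLin' M) := by
    ext y; simp [Matrix.toLin'_apply]
  have h2 : LinearMap.det (Matrix.toLin' M) = M.det := LinearMap.det_toLin' M
  rw [h1, Measure.addHaar_preimage_linearMap volume (by rw [h2]; exact hdet) s, h2]

lemma preimage_meas_one (M : Matrix (Fin 2) (Fin 2) ℝ) (hdet : |M.det| = 1) (s : Set E2) :
    volume ((fun y => M *ᵥ y) ⁻¹' s) = volume s := by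
  have h0 : M.det ≠ 0 := fun h => by simp [h] at hdet
  rw [preimage_meas M h0, abs_inv, hdet]
  simp

lemma iterate_mulVec (M : Matrix (Fin 2) (Fin 2) ℝ) (n : ℕ) :
    (fun y : E2 => M *ᵥ y)^[n] = fun y => (M ^ n) *ᵥ y := by
  induction n with
  | zero => ext y; simp
  | succ n ih =>
    ext y
    rw [Function.iterate_succ_apply', ih]
    simp only [pow_succ', Matrix.mulVec_mulVec]

lemma preimage_ae_eq (M : Matrix (Fin 2) (Fin 2) ℝ) (hdet : |M.det| = 1) {s t : Set E2}
    (h : s =ᵐ[volume] t) :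
    (fun y : E2 => M *ᵥ y) ⁻¹' s =ᵐ[volume] (fun y : E2 => M *ᵥ y) ⁻¹' t := by
  rw [MeasureTheory.ae_eq_set] at h ⊢
  constructor
  · rw [← Set.preimage_diff, preimage_meas_one M hdet, h.1]
  · rw [← Set.preimage_diff, preimage_meas_one M hdet, h.2]

lemma abs_det_pow (M : Matrix (Fin 2) (Fin 2) ℝ) (hdet : |M.det| = 1) (n : ℕ) :
    |(M ^ n).det| = 1 := by
  rw [Matrix.det_pow, abs_pow, hdet, one_pow]

lemma pre_iter_ae (M : Matrix (Fin 2) (Fin 2) ℝ) (hdet : |M.det| = 1) (S : Set E2)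
    (hinv : (fun y : E2 => M *ᵥ y) ⁻¹' S =ᵐ[volume] S) (n : ℕ) :
    (fun y : E2 => (M ^ n) *ᵥ y) ⁻¹' S =ᵐ[volume] S := by
  induction n with
  | zero => simp; exact ae_eq_refl S
  | succ n ih =>
    have hcomp : (fun y : E2 => (M ^ (n+1)) *ᵥ y)
        = (fun y : E2 => (M ^ n) *ᵥ y) ∘ (fun y : E2 => M *ᵥ y) := by
      ext y
      simp only [Function.comp_apply, Matrix.mulVec_mulVec, pow_succ]
    rw [hcomp, Set.preimage_comp]
    exact (preimage_ae_eq M hdet ih).trans hinv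

/-- Core escape lemma. -/
lemma escape_zero (M : Matrix (Fin 2) (Fin 2) ℝ) (hdet : |M.det| = 1)
    (S : Set E2) (hSm : MeasurableSet S) (hfin : volume S < ⊤)
    (hinv : (fun y : E2 => M *ᵥ y) ⁻¹' S =ᵐ[volume] S)
    (A : Set E2) (hA : A ⊆ S) (r : ℕ → ℝ) (hr : Tendsto r atTop atTop)
    (hesc : ∀ x ∈ A, ∀ n : ℕ, r n ≤ ‖(M ^ n) *ᵥ x‖) :
    volume A = 0 := by
  have key : ∀ n : ℕ, volume A ≤ volume (S ∩ {x : E2 | r n ≤ ‖x‖}) := by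
    intro n
    have hsub : A ⊆ S ∩ ((fun y : E2 => (M ^ n) *ᵥ y) ⁻¹' {x : E2 | r n ≤ ‖x‖}) := by
      intro x hx
      exact ⟨hA hx, hesc x hx n⟩
    calc volume A ≤ volume (S ∩ ((fun y : E2 => (M ^ n) *ᵥ y) ⁻¹' {x : E2 | r n ≤ ‖x‖})) :=
          measure_mono hsub
      _ = volume (((fun y : E2 => (M ^ n) *ᵥ y) ⁻¹' S)
            ∩ ((fun y : E2 => (M ^ n) *ᵥ y) ⁻¹' {x : E2 | r n ≤ ‖x‖})) :=
          measure_congr (((pre_iter_ae M hdet S hinv n).symm).inter (ae_eq_refl _))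
      _ = volume ((fun y : E2 => (M ^ n) *ᵥ y) ⁻¹' (S ∩ {x : E2 | r n ≤ ‖x‖})) := by
          rw [Set.preimage_inter]
      _ = volume (S ∩ {x : E2 | r n ≤ ‖x‖}) :=
          preimage_meas_one _ (abs_det_pow M hdet n) _
  -- now the decreasing family
  have key2 : ∀ m : ℕ, volume A ≤ volume (S ∩ {x : E2 | (m : ℝ) ≤ ‖x‖}) := by
    intro m
    obtain ⟨n, hn⟩ := (hr.eventually_ge_atTop (m : ℝ)).exists
    exact (key n).trans (measure_mono (inter_subset_inter_right _ (fun x hx => le_trans hn hx)))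
  have htend : Tendsto (fun m : ℕ => volume (S ∩ {x : E2 | (m : ℝ) ≤ ‖x‖})) atTop
      (𝓝 (volume (⋂ m : ℕ, S ∩ {x : E2 | (m : ℝ) ≤ ‖x‖}))) := by
    apply tendsto_measure_iInter_atTop
    · intro m
      exact (hSm.inter (isClosed_le continuous_const continuous_norm).measurableSet).nullMeasurableSet
    · intro a b hab
      exact inter_subset_inter_right _ (fun x hx => le_trans (Nat.cast_le.mpr hab : (a:ℝ) ≤ (b:ℝ)) hx)
    · exact ⟨0, ((measure_mono (inter_subset_left)).trans_lt hfin).ne⟩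
  have hempty : (⋂ m : ℕ, S ∩ {x : E2 | (m : ℝ) ≤ ‖x‖}) = ∅ := by
    ext x
    simp only [Set.mem_iInter, Set.mem_inter_iff, Set.mem_setOf_eq, Set.mem_empty_iff_false,
      iff_false, not_forall]
    obtain ⟨m, hm⟩ := exists_nat_gt ‖x‖
    exact ⟨m, fun ⟨_, h⟩ => absurd h (not_le.2 hm)⟩
  rw [hempty, measure_empty] at htend
  exact le_antisymm (ge_of_tendsto' htend key2) (zero_le)


lemma hyperplane_null (w : E2) (hw : w ≠ 0) : volume {x : E2 | w ⬝ᵥ x = 0} = 0 := by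
  let f : E2 →ₗ[ℝ] ℝ :=
    { toFun := fun x => w ⬝ᵥ x
      map_add' := fun x y => by simp [dotProduct_add]
      map_smul' := fun c x => by simp [dotProduct_smul] }
  have hker : LinearMap.ker f ≠ ⊤ := by
    intro h
    rw [LinearMap.ker_eq_top] at h
    have : w ⬝ᵥ w = 0 := congrFun (congrArg (fun g => g.toFun) h) w
    exact hw ((dotProduct_self_eq_zero).mp this)
  have : {x : E2 | w ⬝ᵥ x = 0} = (LinearMap.ker f : Set E2) := rfl
  rw [this]
  exact Measure.addHaar_submodule volume _ hker

lemma dot_bound (w : E2) (y : E2) : |w ⬝ᵥ y| ≤ (|w 0| + |w 1|) * ‖y‖ := by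
  have h0 : |y 0| ≤ ‖y‖ := by simpa using norm_le_pi_norm y 0
  have h1 : |y 1| ≤ ‖y‖ := by simpa using norm_le_pi_norm y 1
  have : w ⬝ᵥ y = w 0 * y 0 + w 1 * y 1 := by
    simp [dotProduct, Fin.sum_univ_two]
  rw [this]
  calc |w 0 * y 0 + w 1 * y 1| ≤ |w 0 * y 0| + |w 1 * y 1| := abs_add_le _ _
    _ = |w 0| * |y 0| + |w 1| * |y 1| := by rw [abs_mul, abs_mul]
    _ ≤ |w 0| * ‖y‖ + |w 1| * ‖y‖ := by nlinarith [abs_nonneg (w 0), abs_nonneg (w 1)]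
    _ = (|w 0| + |w 1|) * ‖y‖ := by ring

lemma wsum_pos (w : E2) (hw : w ≠ 0) : 0 < |w 0| + |w 1| := by
  rcases Function.ne_iff.mp hw with ⟨i, hi⟩
  fin_cases i
  · have := abs_pos.mpr (show w 0 ≠ 0 by simpa using hi)
    nlinarith [abs_nonneg (w 1)]
  · have := abs_pos.mpr (show w 1 ≠ 0 by simpa using hi)
    nlinarith [abs_nonneg (w 0)]



lemma vecMul_pow_eig (M : Matrix (Fin 2) (Fin 2) ℝ) (l : ℝ) (w : E2)
    (hwM : w ᵥ* M = l • w) (n : ℕ) : w ᵥ* (M ^ n) = (l ^ n) • w := by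
  induction n with
  | zero => simp
  | succ n ih =>
    rw [pow_succ, ← Matrix.vecMul_vecMul, ih, Matrix.smul_vecMul, hwM, smul_smul, ← pow_succ]

lemma no_unstable (M : Matrix (Fin 2) (Fin 2) ℝ) (hdet : |M.det| = 1)
    (S : Set E2) (hSm : MeasurableSet S) (hfin : volume S < ⊤)
    (hinv : (fun y : E2 => M *ᵥ y) ⁻¹' S =ᵐ[volume] S)
    (l : ℝ) (hl : 1 < |l|) (w : E2) (hw : w ≠ 0) (hwM : w ᵥ* M = l • w) :
    volume S = 0 := by
  set c := |w 0| + |w 1| with hc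
  have hcpos : 0 < c := wsum_pos w hw
  have hiter : ∀ (x : E2) (n : ℕ), w ⬝ᵥ ((M ^ n) *ᵥ x) = l ^ n * (w ⬝ᵥ x) := by
    intro x n
    rw [Matrix.dotProduct_mulVec, vecMul_pow_eig M l w hwM n, smul_dotProduct,
      smul_eq_mul]
  -- each slab has measure zero
  have hslab : ∀ k : ℕ, volume (S ∩ {x : E2 | 1/((k:ℝ)+1) ≤ |w ⬝ᵥ x|}) = 0 := by
    intro k
    apply escape_zero M hdet S hSm hfin hinv _ inter_subset_left
      (fun n => |l| ^ n * ((1/((k:ℝ)+1)) / c))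
    · apply Tendsto.atTop_mul_const (by positivity)
      exact tendsto_pow_atTop_atTop_of_one_lt hl
    · rintro x ⟨hxS, hxk⟩ n
      have hxk' : 1/((k:ℝ)+1) ≤ |w ⬝ᵥ x| := hxk
      have hb := dot_bound w ((M ^ n) *ᵥ x)
      rw [hiter x n, abs_mul, abs_pow] at hb
      have h1 : |l| ^ n * (1/((k:ℝ)+1)) ≤ |l| ^ n * |w ⬝ᵥ x| := by
        have : (0:ℝ) < |l| ^ n := by positivity
        nlinarith
      rw [← mul_div_assoc, div_le_iff₀ hcpos]
      calc |l| ^ n * (1/((k:ℝ)+1)) ≤ |l| ^ n * |w ⬝ᵥ x| := h1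
        _ ≤ c * ‖(M ^ n) *ᵥ x‖ := by rw [hc] at *; exact hb
        _ = ‖(M ^ n) *ᵥ x‖ * c := by ring
  -- cover S by the hyperplane and the slabs
  have hcover : S ⊆ {x : E2 | w ⬝ᵥ x = 0} ∪ ⋃ k : ℕ, (S ∩ {x : E2 | 1/((k:ℝ)+1) ≤ |w ⬝ᵥ x|}) := by
    intro x hx
    by_cases hx0 : w ⬝ᵥ x = 0
    · exact Or.inl hx0
    · obtain ⟨k, hk⟩ := exists_nat_one_div_lt (abs_pos.mpr hx0)
      exact Or.inr (Set.mem_iUnion.mpr ⟨k, hx, le_of_lt hk⟩)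
  have hle := le_trans (measure_mono hcover) (measure_union_le (μ := volume) _ _)
  have h2 : volume (⋃ k : ℕ, (S ∩ {x : E2 | 1/((k:ℝ)+1) ≤ |w ⬝ᵥ x|})) = 0 :=
    measure_iUnion_null (μ := volume) hslab
  rw [hyperplane_null w hw, h2, zero_add] at hle
  exact le_antisymm hle (zero_le)

lemma no_jordan (M : Matrix (Fin 2) (Fin 2) ℝ) (hdet : |M.det| = 1)
    (S : Set E2) (hSm : MeasurableSet S) (hfin : volume S < ⊤)
    (hinv : (fun y : E2 => M *ᵥ y) ⁻¹' S =ᵐ[volume] S)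
    (l : ℝ) (hl : l = 1 ∨ l = -1) (u w : E2) (hw : w ≠ 0)
    (hwM : w ᵥ* M = l • w) (huM : u ᵥ* M = l • u + w) :
    volume S = 0 := by
  have hl1 : |l| = 1 := by rcases hl with h | h <;> simp [h]
  have hll : l ^ 2 = 1 := by rcases hl with h | h <;> simp [h]
  have habs : ∀ m : ℕ, |l ^ m| = 1 := by
    intro m; rw [abs_pow, hl1, one_pow]
  set cu := |u 0| + |u 1| with hcu
  have hcupos : 0 < cu := by
    rcases eq_or_ne u 0 with rfl | hu
    · exfalso
      apply hw
      have h0 : (0 : E2) ᵥ* M = l • (0 : E2) + w := huM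
      simpa using h0.symm
    · exact wsum_pos u hu
  have hiter : ∀ n : ℕ, u ᵥ* (M ^ n) = (l ^ n) • u + ((n : ℝ) * l ^ (n+1)) • w := by
    intro n
    induction n with
    | zero => simp
    | succ n ih =>
      rw [pow_succ, ← Matrix.vecMul_vecMul, ih, Matrix.add_vecMul, Matrix.smul_vecMul,
        Matrix.smul_vecMul, huM, hwM]
      ext j
      simp only [Pi.add_apply, Pi.smul_apply, smul_eq_mul, Nat.cast_succ]
      push_cast
      linear_combination (-(l ^ n * w j)) * hll
  have hphi : ∀ (x : E2) (n : ℕ), w ⬝ᵥ ((M ^ n) *ᵥ x) = l ^ n * (w ⬝ᵥ x) := by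
    intro x n
    rw [Matrix.dotProduct_mulVec, vecMul_pow_eig M l w hwM n, smul_dotProduct,
      smul_eq_mul]
  have hpsi : ∀ (x : E2) (n : ℕ),
      u ⬝ᵥ ((M ^ n) *ᵥ x) = l ^ n * (u ⬝ᵥ x) + ((n : ℝ) * l ^ (n+1)) * (w ⬝ᵥ x) := by
    intro x n
    rw [Matrix.dotProduct_mulVec, hiter n, add_dotProduct, smul_dotProduct,
      smul_dotProduct, smul_eq_mul, smul_eq_mul]
  -- each slab has measure zero
  have hslab : ∀ k m : ℕ,
      volume (S ∩ {x : E2 | 1/((k:ℝ)+1) ≤ |w ⬝ᵥ x| ∧ |u ⬝ᵥ x| ≤ (m:ℝ)}) = 0 := by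
    intro k m
    apply escape_zero M hdet S hSm hfin hinv _ inter_subset_left
      (fun n => ((n : ℝ) * (1/((k:ℝ)+1)) - m) / cu)
    · apply Tendsto.atTop_div_const hcupos
      apply tendsto_atTop_add_const_right
      exact Tendsto.atTop_mul_const (by positivity) tendsto_natCast_atTop_atTop
    · rintro x ⟨hxS, hxk, hxm⟩ n
      have hb := dot_bound u ((M ^ n) *ᵥ x)
      rw [hpsi x n] at hb
      have e1 : |l ^ n * (u ⬝ᵥ x)| = |u ⬝ᵥ x| := by rw [abs_mul, habs, one_mul]
      have e2 : |((n : ℝ) * l ^ (n+1)) * (w ⬝ᵥ x)| = (n : ℝ) * |w ⬝ᵥ x| := by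
        rw [abs_mul, abs_mul, habs, mul_one, Nat.abs_cast]
      have htri : |((n : ℝ) * l ^ (n+1)) * (w ⬝ᵥ x)|
          ≤ |l ^ n * (u ⬝ᵥ x) + ((n : ℝ) * l ^ (n+1)) * (w ⬝ᵥ x)| + |l ^ n * (u ⬝ᵥ x)| := by
        have := abs_sub (l ^ n * (u ⬝ᵥ x) + ((n : ℝ) * l ^ (n+1)) * (w ⬝ᵥ x))
          (l ^ n * (u ⬝ᵥ x))
        simpa using this
      rw [e1, e2] at htri
      rw [div_le_iff₀ hcupos]
      have hn0 : (0:ℝ) ≤ (n:ℝ) := Nat.cast_nonneg n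
      nlinarith [htri, hb, hxk, hxm, abs_nonneg (l ^ n * (u ⬝ᵥ x) + ((n : ℝ) * l ^ (n+1)) * (w ⬝ᵥ x))]
  have hcover : S ⊆ {x : E2 | w ⬝ᵥ x = 0}
      ∪ ⋃ k : ℕ, ⋃ m : ℕ, (S ∩ {x : E2 | 1/((k:ℝ)+1) ≤ |w ⬝ᵥ x| ∧ |u ⬝ᵥ x| ≤ (m:ℝ)}) := by
    intro x hx
    by_cases hx0 : w ⬝ᵥ x = 0
    · exact Or.inl hx0
    · obtain ⟨k, hk⟩ := exists_nat_one_div_lt (abs_pos.mpr hx0)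
      obtain ⟨m, hm⟩ := exists_nat_ge (|u ⬝ᵥ x|)
      exact Or.inr (Set.mem_iUnion.mpr ⟨k, Set.mem_iUnion.mpr ⟨m, hx, le_of_lt hk, hm⟩⟩)
  have hle := le_trans (measure_mono hcover) (measure_union_le (μ := volume) _ _)
  have h2 : volume (⋃ k : ℕ, ⋃ m : ℕ,
      (S ∩ {x : E2 | 1/((k:ℝ)+1) ≤ |w ⬝ᵥ x| ∧ |u ⬝ᵥ x| ≤ (m:ℝ)})) = 0 :=
    measure_iUnion_null (μ := volume) (fun k => measure_iUnion_null (μ := volume) (hslab k))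
  rw [hyperplane_null w hw, h2, zero_add] at hle
  exact le_antisymm hle (zero_le)

lemma exists_big_root (t d : ℝ) (h : (d = 1 ∧ 4 < t^2) ∨ (d = -1 ∧ t ≠ 0)) :
    ∃ l : ℝ, 1 < |l| ∧ l^2 - t*l + d = 0 := by
  have hD : 0 < t^2 - 4*d := by
    rcases h with ⟨hd, ht⟩ | ⟨hd, ht⟩
    · rw [hd]; linarith
    · rw [hd]; nlinarith
  set s := Real.sqrt (t^2 - 4*d) with hs
  have hs2 : s^2 = t^2 - 4*d := Real.sq_sqrt hD.le
  have hs0 : 0 ≤ s := Real.sqrt_nonneg _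
  have hbig : 2 < |t| + s := by
    rcases h with ⟨hd, ht⟩ | ⟨hd, ht⟩
    · have : 2 < |t| := by nlinarith [abs_nonneg t, sq_abs t]
      linarith
    · have h4 : (2:ℝ) < s := by
        have : (4:ℝ) < s^2 := by rw [hs2, hd]; nlinarith [sq_abs t, abs_pos.mpr ht]
        nlinarith
      linarith [abs_nonneg t]
  rcases le_or_gt 0 t with htpos | htneg
  · refine ⟨(t + s)/2, ?_, by nlinarith⟩
    rw [abs_of_pos (by rw [abs_of_nonneg htpos] at hbig; linarith)]
    rw [abs_of_nonneg htpos] at hbig; linarith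
  · refine ⟨(t - s)/2, ?_, by nlinarith⟩
    rw [abs_of_neg (by linarith)]
    rw [abs_of_neg htneg] at hbig; linarith

lemma exists_left_eig (M : Matrix (Fin 2) (Fin 2) ℝ) (l : ℝ)
    (hroot : l^2 - M.trace * l + M.det = 0) :
    ∃ w : E2, w ≠ 0 ∧ w ᵥ* M = l • w := by
  have hdet : (M - l • 1).det = 0 := by
    have e00 : (M - l • (1 : Matrix (Fin 2) (Fin 2) ℝ)) 0 0 = M 0 0 - l := by
      simp [Matrix.sub_apply, Matrix.one_apply]
    have e01 : (M - l • (1 : Matrix (Fin 2) (Fin 2) ℝ)) 0 1 = M 0 1 := by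
      simp [Matrix.sub_apply, Matrix.one_apply]
    have e10 : (M - l • (1 : Matrix (Fin 2) (Fin 2) ℝ)) 1 0 = M 1 0 := by
      simp [Matrix.sub_apply, Matrix.one_apply]
    have e11 : (M - l • (1 : Matrix (Fin 2) (Fin 2) ℝ)) 1 1 = M 1 1 - l := by
      simp [Matrix.sub_apply, Matrix.one_apply]
    rw [Matrix.trace_fin_two, Matrix.det_fin_two] at hroot
    rw [Matrix.det_fin_two, e00, e01, e10, e11]
    nlinarith [hroot]
  obtain ⟨v, hv0, hv⟩ := Matrix.exists_vecMul_eq_zero_iff.mpr hdet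
  refine ⟨v, hv0, ?_⟩
  have h2 : v ᵥ* M - l • v = 0 := by
    have h1 : v ᵥ* (l • (1 : Matrix (Fin 2) (Fin 2) ℝ)) = l • v := by
      rw [Matrix.smul_one_eq_diagonal]
      ext j; rw [Matrix.vecMul_diagonal]; simp [mul_comm]
    have : v ᵥ* (M - l • 1) = v ᵥ* M - l • v := by
      rw [Matrix.vecMul_sub, h1]
    rw [← this, hv]
  exact sub_eq_zero.mp h2

lemma conj_to (T : Matrix.GeneralLinearGroup (Fin 2) ℝ) (R P : Matrix (Fin 2) (Fin 2) ℝ)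
    (hP : P.det ≠ 0) (hMP : (T : Matrix (Fin 2) (Fin 2) ℝ) * P = P * R)
    (hR : R ∈ Matrix.orthogonalGroup (Fin 2) ℝ) :
    ∃ B : Matrix.GeneralLinearGroup (Fin 2) ℝ,
      ((B * T * B⁻¹ : Matrix.GeneralLinearGroup (Fin 2) ℝ) : Matrix (Fin 2) (Fin 2) ℝ) ∈
        Matrix.orthogonalGroup (Fin 2) ℝ := by
  set Pu := Matrix.GeneralLinearGroup.mkOfDetNeZero P hP with hPu
  refine ⟨Pu⁻¹, ?_⟩
  have hPuv : (Pu : Matrix (Fin 2) (Fin 2) ℝ) = P := rfl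
  have hval : ((Pu⁻¹ * T * (Pu⁻¹)⁻¹ : Matrix.GeneralLinearGroup (Fin 2) ℝ)
      : Matrix (Fin 2) (Fin 2) ℝ)
      = ((Pu⁻¹ : Matrix.GeneralLinearGroup (Fin 2) ℝ) : Matrix (Fin 2) (Fin 2) ℝ)
        * ((T : Matrix (Fin 2) (Fin 2) ℝ) * P) := by
    rw [inv_inv]
    simp [Units.val_mul, hPuv, mul_assoc]
  rw [hval, hMP, ← mul_assoc]
  have hinv : ((Pu⁻¹ : Matrix.GeneralLinearGroup (Fin 2) ℝ) : Matrix (Fin 2) (Fin 2) ℝ) * P = 1 := by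
    calc ((Pu⁻¹ : Matrix.GeneralLinearGroup (Fin 2) ℝ) : Matrix (Fin 2) (Fin 2) ℝ) * P
        = ((Pu⁻¹ * Pu : Matrix.GeneralLinearGroup (Fin 2) ℝ) : Matrix (Fin 2) (Fin 2) ℝ) := by
          rw [Units.val_mul, hPuv]
      _ = 1 := by rw [inv_mul_cancel Pu]; rfl
  rw [hinv, one_mul]
  exact hR

lemma rot_orth (c s : ℝ) (h : c^2 + s^2 = 1) :
    !![c, -s; s, c] ∈ Matrix.orthogonalGroup (Fin 2) ℝ := by
  rw [Matrix.mem_orthogonalGroup_iff]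
  have hstar : star !![c, -s; s, c] = !![c, s; -s, c] := by
    rw [Matrix.star_eq_conjTranspose]
    ext i j
    fin_cases i <;> fin_cases j <;> simp [Matrix.conjTranspose_apply]
  rw [← Matrix.conjTranspose_eq_transpose_of_trivial, ← Matrix.star_eq_conjTranspose, hstar]
  ext i j
  fin_cases i <;> fin_cases j <;>
    simp [Matrix.mul_apply, Fin.sum_univ_two, Matrix.one_apply] <;> nlinarith [h]

lemma rotation_case (M : Matrix (Fin 2) (Fin 2) ℝ) (hd : M.det = 1) (ht : M.trace^2 < 4) :
    ∃ R P : Matrix (Fin 2) (Fin 2) ℝ, P.det ≠ 0 ∧ M * P = P * R ∧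
      R ∈ Matrix.orthogonalGroup (Fin 2) ℝ := by
  have htr : M.trace = M 0 0 + M 1 1 := Matrix.trace_fin_two M
  have hde : M 0 0 * M 1 1 - M 0 1 * M 1 0 = 1 := by rw [Matrix.det_fin_two] at hd; exact hd
  set c := (M 0 0 + M 1 1)/2 with hc
  have hc2 : c^2 < 1 := by rw [htr] at ht; rw [hc]; nlinarith
  set s := Real.sqrt (1 - c^2) with hs
  have hs2 : s^2 = 1 - c^2 := Real.sq_sqrt (by nlinarith)
  have hspos : 0 < s := Real.sqrt_pos.mpr (by nlinarith)
  have hc' : M 1 0 ≠ 0 := by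
    intro h0
    rw [htr] at ht
    rw [h0, mul_zero, sub_zero] at hde
    nlinarith [sq_nonneg (M 0 0 - M 1 1)]
  refine ⟨!![c, -s; s, c], !![1, (M 0 0 - c)/s; 0, M 1 0/s], ?_, ?_, rot_orth c s (by nlinarith)⟩
  · rw [Matrix.det_fin_two_of]
    simp only [one_mul, zero_mul, mul_zero, sub_zero]
    exact div_ne_zero hc' (ne_of_gt hspos)
  · ext i j
    fin_cases i <;> fin_cases j <;>
      simp only [Matrix.mul_apply, Fin.sum_univ_two, Matrix.cons_val', Matrix.cons_val_zero,
        Matrix.cons_val_one, Matrix.head_cons, Matrix.head_fin_const, Matrix.empty_val',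
        Matrix.cons_val_fin_one, Fin.zero_eta, Fin.mk_one, Matrix.of_apply] <;>
      field_simp
    · ring
    · linear_combination hs2 - hde - (c + (M 0 0 + M 1 1) / 2) * hc
    · ring
    · linear_combination (-2 * M 1 0) * hc

lemma vecMul_smul_one (v : E2) (l : ℝ) :
    v ᵥ* (l • (1 : Matrix (Fin 2) (Fin 2) ℝ)) = l • v := by
  rw [Matrix.smul_one_eq_diagonal]
  ext j; rw [Matrix.vecMul_diagonal]; simp [mul_comm]

lemma refl_orth (e : ℝ) (he : e^2 = 1) :
    !![e, 0; 0, -e] ∈ Matrix.orthogonalGroup (Fin 2) ℝ := by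
  rw [Matrix.mem_orthogonalGroup_iff]
  have hstar : star !![e, 0; 0, -e] = !![e, 0; 0, -e] := by
    rw [Matrix.star_eq_conjTranspose]
    ext i j
    fin_cases i <;> fin_cases j <;> simp [Matrix.conjTranspose_apply]
  rw [← Matrix.conjTranspose_eq_transpose_of_trivial, ← Matrix.star_eq_conjTranspose, hstar]
  ext i j
  fin_cases i <;> fin_cases j <;>
    simp [Matrix.mul_apply, Fin.sum_univ_two, Matrix.one_apply] <;> nlinarith [he]

lemma scalar_orth (l : ℝ) (hl : l = 1 ∨ l = -1) :
    (l • (1 : Matrix (Fin 2) (Fin 2) ℝ)) ∈ Matrix.orthogonalGroup (Fin 2) ℝ := by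
  rw [Matrix.mem_orthogonalGroup_iff]
  have : star (l • (1 : Matrix (Fin 2) (Fin 2) ℝ)) = l • 1 := by
    rw [Matrix.star_eq_conjTranspose]
    ext i j
    fin_cases i <;> fin_cases j <;> simp [Matrix.conjTranspose_apply, Matrix.one_apply]
  rw [← Matrix.conjTranspose_eq_transpose_of_trivial, ← Matrix.star_eq_conjTranspose, this, smul_mul_smul_comm, one_mul]
  have h2 : l * l = 1 := by rcases hl with h | h <;> simp [h]
  rw [h2, one_smul]

lemma reflection_case (M : Matrix (Fin 2) (Fin 2) ℝ) (hd : M.det = -1) (ht : M.trace = 0) :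
    ∃ R P : Matrix (Fin 2) (Fin 2) ℝ, P.det ≠ 0 ∧ M * P = P * R ∧
      R ∈ Matrix.orthogonalGroup (Fin 2) ℝ := by
  have h11 : M 1 1 = -(M 0 0) := by
    rw [Matrix.trace_fin_two] at ht; linarith
  have hde : M 0 0 * M 1 1 - M 0 1 * M 1 0 = -1 := by rw [Matrix.det_fin_two] at hd; exact hd
  have hM2 : M * M = 1 := by
    ext i j
    fin_cases i <;> fin_cases j <;>
      simp [Matrix.mul_apply, Fin.sum_univ_two, Matrix.one_apply]
    · linear_combination (-1) * hde + M 0 0 * h11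
    · linear_combination M 0 1 * h11
    · linear_combination M 1 0 * h11
    · linear_combination (-1) * hde + M 1 1 * h11
  set e : ℝ := if M 0 0 = -1 then -1 else 1 with he_def
  have he2 : e^2 = 1 := by
    rw [he_def]; split <;> norm_num
  have hae : M 0 0 * e ≠ -1 := by
    rw [he_def]; split
    · rename_i hcase; rw [hcase]; norm_num
    · rename_i hcase; rw [mul_one]; exact hcase
  set R : Matrix (Fin 2) (Fin 2) ℝ := !![e, 0; 0, -e] with hR_def
  have hR2 : R * R = 1 := by
    ext i j
    fin_cases i <;> fin_cases j <;>
      simp [hR_def, Matrix.mul_apply, Fin.sum_univ_two, Matrix.one_apply] <;> nlinarith [he2]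
  refine ⟨R, M + R, ?_, ?_, by rw [hR_def]; exact refl_orth e he2⟩
  · have hP : (M + R).det = -2 * (M 0 0 * e + 1) := by
      have e00 : (M + R) 0 0 = M 0 0 + e := by simp [hR_def]
      have e01 : (M + R) 0 1 = M 0 1 := by simp [hR_def]
      have e10 : (M + R) 1 0 = M 1 0 := by simp [hR_def]
      have e11 : (M + R) 1 1 = M 1 1 - e := by simp [hR_def, sub_eq_add_neg]
      rw [Matrix.det_fin_two, e00, e01, e10, e11]
      linear_combination hde + e * h11 + (-1) * he2
    rw [hP]
    intro hcontra
    apply hae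
    rcases mul_eq_zero.mp hcontra with h | h
    · norm_num at h
    · linarith
  · rw [mul_add, add_mul, hM2, hR2, add_comm]

lemma jordan_setup (M : Matrix (Fin 2) (Fin 2) ℝ) (hd : M.det = 1) (l : ℝ)
    (hl : l = 1 ∨ l = -1) (htr : M.trace = 2 * l) (hne : M ≠ l • 1) :
    ∃ u w : E2, w ≠ 0 ∧ w ᵥ* M = l • w ∧ u ᵥ* M = l • u + w := by
  set N := M - l • 1 with hN
  have hl2 : l^2 = 1 := by rcases hl with h | h <;> simp [h]
  have h11 : M 1 1 = 2*l - M 0 0 := by rw [Matrix.trace_fin_two] at htr; linarith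
  have hde : M 0 0 * M 1 1 - M 0 1 * M 1 0 = 1 := by rw [Matrix.det_fin_two] at hd; exact hd
  have hMN : M = N + l • 1 := by rw [hN, sub_add _ _ _]; simp
  have e00 : N 0 0 = M 0 0 - l := by simp [hN, Matrix.one_apply]
  have e01 : N 0 1 = M 0 1 := by simp [hN, Matrix.one_apply]
  have e10 : N 1 0 = M 1 0 := by simp [hN, Matrix.one_apply]
  have e11 : N 1 1 = M 1 1 - l := by simp [hN, Matrix.one_apply]
  have hN2 : N * N = 0 := by
    ext i j
    fin_cases i <;> fin_cases j <;>
      simp [Matrix.mul_apply, Fin.sum_univ_two, e00, e01, e10, e11]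
    · linear_combination hl2 - hde + M 0 0 * h11
    · linear_combination M 0 1 * h11
    · linear_combination M 1 0 * h11
    · linear_combination hl2 - hde + M 1 1 * h11
  have hNne : N ≠ 0 := by
    intro hzero
    apply hne
    rw [hN] at hzero
    exact sub_eq_zero.mp hzero
  have hex : ∃ i j, N i j ≠ 0 := by
    by_contra hcon
    push_neg at hcon
    exact hNne (Matrix.ext fun i j => by rw [hcon i j]; rfl)
  obtain ⟨i, j, hij⟩ := hex
  set u : E2 := Pi.single i 1 with hu_def
  have hu : u ᵥ* N = N i := Matrix.single_one_vecMul i N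
  have hwne : N i ≠ 0 := fun hzero => hij (by rw [congrFun hzero j]; rfl)
  have hwN : (N i) ᵥ* N = 0 := by
    rw [← hu, Matrix.vecMul_vecMul, hN2, Matrix.vecMul_zero]
  refine ⟨u, N i, hwne, ?_, ?_⟩
  · rw [hMN, Matrix.vecMul_add, hwN, zero_add, vecMul_smul_one]
  · rw [hMN, Matrix.vecMul_add, hu, vecMul_smul_one, add_comm]

end Stmt8
end
end Stmt8Aux

/-- Let `T ∈ GL(2, ℝ)`. If there exist a constant `C ∈ ℝ` and a measurable
`λ : ℝ² → ℝ` whose support has finite, nonzero Lebesgue measure such that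
`λ(y) = C · λ(T y)` for almost every `y`, then `T` is conjugate in `GL(2, ℝ)` to an
orthogonal matrix. -/
theorem invariant_filter_implies_conjugate_to_orthogonal
    (T : Matrix.GeneralLinearGroup (Fin 2) ℝ)
    (h : ∃ (C : ℝ) (lam : (Fin 2 → ℝ) → ℝ), Measurable lam ∧
      volume (Function.support lam) ≠ 0 ∧
      volume (Function.support lam) < ⊤ ∧
      (∀ᵐ y ∂volume, lam y = C * lam ((T : Matrix (Fin 2) (Fin 2) ℝ) *ᵥ y))) :
    ∃ B : Matrix.GeneralLinearGroup (Fin 2) ℝ,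
      ((B * T * B⁻¹ : Matrix.GeneralLinearGroup (Fin 2) ℝ) : Matrix (Fin 2) (Fin 2) ℝ) ∈
        Matrix.orthogonalGroup (Fin 2) ℝ := by
  open Stmt8 in
  obtain ⟨C, lam, hmeas, h0, hfin, hae⟩ := h
  set M : Matrix (Fin 2) (Fin 2) ℝ := (T : Matrix (Fin 2) (Fin 2) ℝ) with hM
  have hMdet : M.det ≠ 0 := (Matrix.isUnits_det_units T).ne_zero
  set S : Set Stmt8.E2 := Function.support lam with hS
  have hSm : MeasurableSet S := by
    have heq : S = lam ⁻¹' ({0}ᶜ) := by ext x; simp [hS, Function.mem_support]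
    rw [heq]
    exact hmeas (measurableSet_singleton 0).compl
  have hC : C ≠ 0 := by
    intro hC0
    apply h0
    have hlam : ∀ᵐ y ∂volume, lam y = 0 := by
      filter_upwards [hae] with y hy
      rw [hy, hC0, zero_mul]
    have hnull := ae_iff.mp hlam
    simpa [hS, Function.support] using hnull
  have hinv : (fun y : Stmt8.E2 => M *ᵥ y) ⁻¹' S =ᵐ[volume] S := by
    rw [Filter.eventuallyEq_set]
    filter_upwards [hae] with y hy
    simp only [Set.mem_preimage, hS, Function.mem_support]
    constructor
    · intro hne
      rw [hy]
      exact mul_ne_zero hC hne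
    · intro hne
      rw [hy] at hne
      exact right_ne_zero_of_mul hne
  have hdet1 : |M.det| = 1 := by
    have hpre := Stmt8.preimage_meas M hMdet S
    rw [measure_congr hinv] at hpre
    have h1 : ENNReal.ofReal |(M.det)⁻¹| = 1 :=
      (ENNReal.mul_left_inj h0 hfin.ne).mp (by rw [one_mul]; exact hpre.symm)
    rw [ENNReal.ofReal_eq_one, abs_inv, inv_eq_one] at h1
    exact h1
  have habs := hdet1
  rw [abs_eq (by norm_num : (0:ℝ) ≤ 1)] at habs
  rcases habs with hd1 | hdm1
  · rcases lt_trichotomy (M.trace^2) 4 with htlt | hteq | htgt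
    · obtain ⟨R, P, hP, hMP, hR⟩ := Stmt8.rotation_case M hd1 htlt
      exact Stmt8.conj_to T R P hP hMP hR
    · set l := M.trace / 2 with hl_def
      have hl : l = 1 ∨ l = -1 := by
        have hfact : (M.trace - 2) * (M.trace + 2) = 0 := by nlinarith
        rcases mul_eq_zero.mp hfact with hcase | hcase
        · left; rw [hl_def]; linarith
        · right; rw [hl_def]; linarith
      have htr : M.trace = 2 * l := by rw [hl_def]; ring
      by_cases hsc : M = l • 1
      · exact Stmt8.conj_to T (l • 1) 1 (by simp) (by rw [← hM, hsc]; simp)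
          (Stmt8.scalar_orth l hl)
      · exfalso
        obtain ⟨u, w, hwne, hwM, huM⟩ := Stmt8.jordan_setup M hd1 l hl htr hsc
        exact h0 (Stmt8.no_jordan M hdet1 S hSm hfin hinv l hl u w hwne hwM huM)
    · exfalso
      obtain ⟨l, hl1, hlroot⟩ := Stmt8.exists_big_root M.trace M.det (Or.inl ⟨hd1, htgt⟩)
      obtain ⟨w, hwne, hwM⟩ := Stmt8.exists_left_eig M l hlroot
      exact h0 (Stmt8.no_unstable M hdet1 S hSm hfin hinv l hl1 w hwne hwM)
  · by_cases ht0 : M.trace = 0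
    · obtain ⟨R, P, hP, hMP, hR⟩ := Stmt8.reflection_case M hdm1 ht0
      exact Stmt8.conj_to T R P hP hMP hR
    · exfalso
      obtain ⟨l, hl1, hlroot⟩ := Stmt8.exists_big_root M.trace M.det (Or.inr ⟨hdm1, ht0⟩)
      obtain ⟨w, hwne, hwM⟩ := Stmt8.exists_left_eig M l hlroot
      exact h0 (Stmt8.no_unstable M hdet1 S hSm hfin hinv l hl1 w hwne hwM)
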